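/- For 1 ≤ p ≤ n−1, the least cardinality of a set A ⊆ {α ∈ IC_n : |im α| = p} such that every element of IC_n of height p is a finite product of elements of A equals C(n, p) + (n−1)·C(n−2, p−1). (This number is the rank of the Rees quotient RIC_n(p) = K(n,p)/K(n,p−1), where K(n,p) = {α ∈ IC_n : |im α| ≤ p}.) -/

import Mathlib

open scoped Classical

namespace ICCatalan

/-- Partial injective transformations on `Fin n` (representing the chain `[n] = {1,…,n}`). -/
abbrev PT (n : ℕ) := Fin n ≃. Fin n

/-- Composition (left-to-right, `x(αβ) = (xα)β`) makes `PT n` a monoid. -/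
noncomputable instance instMonoidPT (n : ℕ) : Monoid (PT n) where
  mul f g := f.trans g
  one := PEquiv.refl (Fin n)
  mul_assoc := PEquiv.trans_assoc
  one_mul := PEquiv.refl_trans
  mul_one := PEquiv.trans_refl

lemma mul_def {n : ℕ} (f g : PT n) : f * g = f.trans g := rfl

/-- The domain of a partial transformation. -/
def pdom {n : ℕ} (f : PT n) : Set (Fin n) := {x | ∃ y, f x = some y}

/-- The image of a partial transformation. -/
def pim {n : ℕ} (f : PT n) : Set (Fin n) := {y | ∃ x, f x = some y}

/-- The height `|im f|` of a partial transformation. -/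
noncomputable def height {n : ℕ} (f : PT n) : ℕ := (pim f).ncard

/-- `f` is order-decreasing: `xf ≤ x` on the domain. -/
def IsDecr {n : ℕ} (f : PT n) : Prop := ∀ x y : Fin n, f x = some y → y ≤ x

/-- `f` is isotone: `x ≤ y` implies `xf ≤ yf` on the domain. -/
def IsIso {n : ℕ} (f : PT n) : Prop :=
  ∀ x₁ x₂ y₁ y₂ : Fin n, f x₁ = some y₁ → f x₂ = some y₂ → x₁ ≤ x₂ → y₁ ≤ y₂

/-- The injective partial Catalan monoid `IC_n`: all isotone order-decreasing
partial injective transformations of `[n]`. -/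
def IC (n : ℕ) : Set (PT n) := {f | IsIso f ∧ IsDecr f}

/-- `Q'_n = {α ∈ IC_n : 1 ∉ dom α}` (the least element of `Fin n` plays the role of `1 ∈ [n]`). -/
def Qp (n : ℕ) : Set (PT n) := {f | f ∈ IC n ∧ ∀ x : Fin n, (x : ℕ) = 0 → f x = none}

/-- `S¹ : S` with an identity adjoined (realized inside `PT n`). -/
def SOne {n : ℕ} (S : Set (PT n)) : Set (PT n) := S ∪ {1}

/-- The starred Green relation `L*` of the subsemigroup `S`. -/
def LStar {n : ℕ} (S : Set (PT n)) (a b : PT n) : Prop :=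
  ∀ x ∈ SOne S, ∀ y ∈ SOne S, (a * x = a * y ↔ b * x = b * y)

/-- The starred Green relation `R*` of the subsemigroup `S`. -/
def RStar {n : ℕ} (S : Set (PT n)) (a b : PT n) : Prop :=
  ∀ x ∈ SOne S, ∀ y ∈ SOne S, (x * a = y * a ↔ x * b = y * b)

/-- The starred Green relation `H* = L* ∩ R*`. -/
def HStar {n : ℕ} (S : Set (PT n)) (a b : PT n) : Prop :=
  LStar S a b ∧ RStar S a b

/-- The partial identity on a subset `A` of `[n]`. -/
noncomputable def pid {n : ℕ} (A : Set (Fin n)) : PT n := PEquiv.ofSet A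

/-- An essential element: exactly one point `y` of the domain is moved, and `yf = y - 1`. -/
def IsEssential {n : ℕ} (f : PT n) : Prop :=
  ∃ y z : Fin n, f y = some z ∧ (z : ℕ) + 1 = (y : ℕ) ∧
    ∀ x w : Fin n, f x = some w → w ≠ x → x = y

/-- The shift of `f`: the number of non-fixed points of its domain. -/
noncomputable def shift {n : ℕ} (f : PT n) : ℕ := {x : Fin n | ∃ w, f x = some w ∧ w ≠ x}.ncard


section Aux

variable {n : ℕ}

/-- domain as a Finset -/
noncomputable def dm (f : PT n) : Finset (Fin n) := Finset.univ.filter (fun x => (f x).isSome)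
/-- image as a Finset -/
noncomputable def im (f : PT n) : Finset (Fin n) := Finset.univ.filter (fun y => (f.symm y).isSome)
/-- evaluation function (junk outside the domain) -/
noncomputable def ev (f : PT n) (x : Fin n) : Fin n := (f x).getD x

lemma mem_dm {f : PT n} {x : Fin n} : x ∈ dm f ↔ ∃ y, f x = some y := by
  simp only [dm, Finset.mem_filter, Finset.mem_univ, true_and, Option.isSome_iff_exists]

lemma mem_im {f : PT n} {y : Fin n} : y ∈ im f ↔ ∃ x, f x = some y := by
  simp only [im, Finset.mem_filter, Finset.mem_univ, true_and, Option.isSome_iff_exists]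
  constructor
  · rintro ⟨x, hx⟩; exact ⟨x, f.eq_some_iff.1 hx⟩
  · rintro ⟨x, hx⟩; exact ⟨x, f.eq_some_iff.2 hx⟩


lemma ev_spec {f : PT n} {x : Fin n} (hx : x ∈ dm f) : f x = some (ev f x) := by
  obtain ⟨y, hy⟩ := mem_dm.1 hx
  simp [ev, hy]

lemma ev_eq {f : PT n} {x y : Fin n} (h : f x = some y) : ev f x = y := by simp [ev, h]

lemma pdom_eq (f : PT n) : pdom f = ↑(dm f) := by ext x; simp [pdom, mem_dm]
lemma pim_eq (f : PT n) : pim f = ↑(im f) := by ext x; simp [pim, mem_im]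
lemma height_eq (f : PT n) : height f = (im f).card := by
  rw [height, pim_eq, Set.ncard_coe_finset]

lemma im_eq_image (f : PT n) : im f = (dm f).image (ev f) := by
  ext y
  simp only [mem_im, Finset.mem_image]
  constructor
  · rintro ⟨x, hx⟩; exact ⟨x, mem_dm.2 ⟨y, hx⟩, ev_eq hx⟩
  · rintro ⟨x, hx, rfl⟩; exact ⟨x, ev_spec hx⟩

lemma ev_injOn (f : PT n) : Set.InjOn (ev f) ↑(dm f) := by
  intro a ha b hb hab
  have h1 := ev_spec (f := f) (by simpa using ha)
  have h2 := ev_spec (f := f) (by simpa using hb)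
  rw [hab] at h1
  exact f.inj (Option.mem_def.2 h1) (Option.mem_def.2 h2)

lemma card_dm_eq (f : PT n) : (dm f).card = (im f).card := by
  rw [im_eq_image, Finset.card_image_of_injOn (ev_injOn f)]

/-- weight of a partial transformation -/
noncomputable def W (f : PT n) : ℤ :=
  (∑ x ∈ dm f, (x : ℤ)) - ∑ y ∈ im f, (y : ℤ)

lemma W_eq_sum (f : PT n) : W f = ∑ x ∈ dm f, ((x : ℤ) - (ev f x : ℤ)) := by
  rw [W, im_eq_image, Finset.sum_image (fun a ha b hb h => ev_injOn f (by simpa using ha) (by simpa using hb) h),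
    Finset.sum_sub_distrib]

lemma ev_le {f : PT n} (hf : f ∈ IC n) {x : Fin n} (hx : x ∈ dm f) : ev f x ≤ x :=
  hf.2 x _ (ev_spec hx)

lemma W_nonneg {f : PT n} (hf : f ∈ IC n) : 0 ≤ W f := by
  rw [W_eq_sum]
  refine Finset.sum_nonneg fun x hx => ?_
  have := ev_le hf hx
  simp only [sub_nonneg, Int.ofNat_le]
  exact_mod_cast Fin.le_def.1 this


lemma trans_eq_some' {f g : PT n} {x z : Fin n} :
    (f * g) x = some z ↔ ∃ y, f x = some y ∧ g y = some z := by
  rw [mul_def]; exact f.trans_eq_some g x z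

lemma IC_mul {f g : PT n} (hf : f ∈ IC n) (hg : g ∈ IC n) : f * g ∈ IC n := by
  constructor
  · intro x1 x2 y1 y2 h1 h2 hle
    obtain ⟨z1, hz1, hz1'⟩ := trans_eq_some'.1 h1
    obtain ⟨z2, hz2, hz2'⟩ := trans_eq_some'.1 h2
    exact hg.1 _ _ _ _ hz1' hz2' (hf.1 _ _ _ _ hz1 hz2 hle)
  · intro x y h
    obtain ⟨z, hz, hz'⟩ := trans_eq_some'.1 h
    exact le_trans (hg.2 _ _ hz') (hf.2 _ _ hz)

lemma dm_mul_subset (f g : PT n) : dm (f * g) ⊆ dm f := by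
  intro x hx
  obtain ⟨z, hz⟩ := mem_dm.1 hx
  obtain ⟨y, hy, -⟩ := trans_eq_some'.1 hz
  exact mem_dm.2 ⟨y, hy⟩

lemma im_mul_subset (f g : PT n) : im (f * g) ⊆ im g := by
  intro y hy
  obtain ⟨x, hx⟩ := mem_im.1 hy
  obtain ⟨z, -, hz⟩ := trans_eq_some'.1 hx
  exact mem_im.2 ⟨z, hz⟩

lemma height_mul_le_left (f g : PT n) : height (f * g) ≤ height f := by
  rw [height_eq, height_eq, ← card_dm_eq, ← card_dm_eq]
  exact Finset.card_le_card (dm_mul_subset f g)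

lemma height_mul_le_right (f g : PT n) : height (f * g) ≤ height g := by
  rw [height_eq, height_eq]
  exact Finset.card_le_card (im_mul_subset f g)

/-- Key structural lemma: if two height-`p` maps compose to height `p`,
then the image of the first equals the domain of the second. -/
lemma im_eq_dm_of_height {f g : PT n} {p : ℕ} (hf : height f = p) (hg : height g = p)
    (hfg : height (f * g) = p) : im f = dm g := by
  have him : im (f * g) = (im f ∩ dm g).image (ev g) := by
    ext y
    simp only [mem_im, Finset.mem_image, Finset.mem_inter]
    constructor
    · rintro ⟨x, hx⟩
      obtain ⟨b, hb, hb'⟩ := trans_eq_some'.1 hx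
      exact ⟨b, ⟨⟨x, hb⟩, mem_dm.2 ⟨y, hb'⟩⟩, ev_eq hb'⟩
    · rintro ⟨b, ⟨hb1, hb2⟩, rfl⟩
      obtain ⟨x, hx⟩ := hb1
      exact ⟨x, trans_eq_some'.2 ⟨b, hx, ev_spec hb2⟩⟩
  have hcard : (im f ∩ dm g).card = p := by
    have hinj : Set.InjOn (ev g) ↑(im f ∩ dm g) := fun a ha b hb h =>
      ev_injOn g (by simp only [Finset.coe_inter] at ha; exact ha.2)
        (by simp only [Finset.coe_inter] at hb; exact hb.2) h
    rw [← hfg, height_eq, him, Finset.card_image_of_injOn hinj]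
  have h1 : im f ∩ dm g = im f := by
    apply Finset.eq_of_subset_of_card_le (Finset.inter_subset_left)
    rw [hcard, ← hf, height_eq]
  have hsub : im f ⊆ dm g := by rw [← h1]; exact Finset.inter_subset_right
  apply Finset.eq_of_subset_of_card_le hsub
  rw [card_dm_eq, ← height_eq, hg, ← hf, height_eq]

lemma dm_mul_of_im_eq {f g : PT n} (h : im f = dm g) : dm (f * g) = dm f := by
  apply Finset.Subset.antisymm (dm_mul_subset f g)
  intro x hx
  have hfx : ev f x ∈ dm g := by rw [← h]; exact mem_im.2 ⟨x, ev_spec hx⟩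
  exact mem_dm.2 ⟨_, trans_eq_some'.2 ⟨ev f x, ev_spec hx, ev_spec hfx⟩⟩

lemma im_mul_of_im_eq {f g : PT n} (h : im f = dm g) : im (f * g) = im g := by
  apply Finset.Subset.antisymm (im_mul_subset f g)
  intro y hy
  obtain ⟨b, hb⟩ := mem_im.1 hy
  have hb' : b ∈ im f := by rw [h]; exact mem_dm.2 ⟨y, hb⟩
  obtain ⟨x, hx⟩ := mem_im.1 hb'
  exact mem_im.2 ⟨x, trans_eq_some'.2 ⟨b, hx, hb⟩⟩

lemma W_mul_of_im_eq {f g : PT n} (h : im f = dm g) : W (f * g) = W f + W g := by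
  rw [W, W, W, dm_mul_of_im_eq h, im_mul_of_im_eq h, h]
  ring


lemma pid_apply (T : Finset (Fin n)) (x : Fin n) :
    pid (↑T : Set (Fin n)) x = if x ∈ T then some x else none := by
  simp only [pid, PEquiv.ofSet]
  split_ifs with h <;> simp [PEquiv.coe_mk_apply, h]

lemma pid_eq_some_iff {T : Finset (Fin n)} {x y : Fin n} :
    pid (↑T : Set (Fin n)) x = some y ↔ x = y ∧ x ∈ T := by
  rw [pid_apply]; split_ifs with h <;> simp [h, eq_comm]

lemma dm_pid (T : Finset (Fin n)) : dm (pid (↑T : Set (Fin n))) = T := by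
  ext x; simp [mem_dm, pid_eq_some_iff]

lemma im_pid (T : Finset (Fin n)) : im (pid (↑T : Set (Fin n))) = T := by
  ext y
  simp only [mem_im, pid_eq_some_iff]
  exact ⟨fun ⟨x, hx, hx'⟩ => hx ▸ hx', fun h => ⟨y, rfl, h⟩⟩

lemma pid_mem_IC (T : Finset (Fin n)) : pid (↑T : Set (Fin n)) ∈ IC n := by
  constructor
  · intro x1 x2 y1 y2 h1 h2 hle
    obtain ⟨rfl, -⟩ := pid_eq_some_iff.1 h1
    obtain ⟨rfl, -⟩ := pid_eq_some_iff.1 h2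
    exact hle
  · intro x y h
    obtain ⟨rfl, -⟩ := pid_eq_some_iff.1 h
    exact le_refl _

lemma W_pid (T : Finset (Fin n)) : W (pid (↑T : Set (Fin n))) = 0 := by
  rw [W, dm_pid, im_pid]; ring

lemma height_pid (T : Finset (Fin n)) : height (pid (↑T : Set (Fin n))) = T.card := by
  rw [height_eq, im_pid]

/-- weight-zero elements of `IC n` are partial identities -/
lemma eq_pid_of_W_eq_zero {f : PT n} (hf : f ∈ IC n) (hW : W f = 0) :
    f = pid (↑(dm f) : Set (Fin n)) := by
  have hfix : ∀ x ∈ dm f, ev f x = x := by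
    intro x hx
    have hsum : ∀ x ∈ dm f, ((x : ℤ) - (ev f x : ℤ)) = 0 := by
      rw [W_eq_sum] at hW
      intro z hz
      refine (Finset.sum_eq_zero_iff_of_nonneg ?_).1 hW z hz
      intro a ha
      have := ev_le hf ha
      simp only [sub_nonneg, Int.ofNat_le]
      exact_mod_cast Fin.le_def.1 this
    have := hsum x hx
    have : ((ev f x : ℕ) : ℤ) = ((x : ℕ) : ℤ) := by omega
    exact Fin.ext (by exact_mod_cast this)
  apply PEquiv.ext
  intro x
  rw [pid_apply]
  split_ifs with h
  · rw [ev_spec h, hfix x h]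
  · rw [← Option.not_isSome_iff_eq_none]
    intro hs
    obtain ⟨y, hy⟩ := Option.isSome_iff_exists.1 hs
    exact h (mem_dm.2 ⟨y, hy⟩)

lemma ofSet_trans_self {S : Set (Fin n)} [DecidablePred (· ∈ S)] {f : PT n}
    (h : ∀ x, x ∈ dm f → x ∈ S) : (PEquiv.ofSet S).trans f = f := by
  apply PEquiv.ext
  intro x
  rw [show (PEquiv.ofSet S).trans f x = ((PEquiv.ofSet S) x).bind f from rfl]
  by_cases hx : x ∈ dm f
  · rw [PEquiv.ofSet_eq_some_self_iff.2 (h x hx)]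
    rfl
  · have hfx : f x = none := by
      rcases h' : f x with _ | y
      · rfl
      · exact absurd (mem_dm.2 ⟨y, h'⟩) hx
    rcases h2 : (PEquiv.ofSet S) x with _ | z
    · rw [hfx]; rfl
    · obtain ⟨rfl, -⟩ := PEquiv.ofSet_eq_some_iff.1 h2
      rfl

lemma pid_trans_self {f : PT n} {T : Finset (Fin n)} (h : dm f ⊆ T) :
    pid (↑T : Set (Fin n)) * f = f := by
  apply PEquiv.ext
  intro x
  rw [show (pid (↑T : Set (Fin n)) * f) x = ((pid (↑T : Set (Fin n))) x).bind f from rfl,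
    pid_apply]
  split_ifs with hxT
  · rfl
  · rcases h' : f x with _ | y
    · rfl
    · exact absurd (h (mem_dm.2 ⟨y, h'⟩)) hxT

lemma trans_pid_self {f : PT n} {T : Finset (Fin n)} (h : im f ⊆ T) :
    f * pid (↑T : Set (Fin n)) = f := by
  apply PEquiv.ext
  intro x
  rw [show (f * pid (↑T : Set (Fin n))) x = (f x).bind (pid (↑T : Set (Fin n))) from rfl]
  rcases h' : f x with _ | y
  · rfl
  · have : y ∈ T := h (mem_im.2 ⟨x, h'⟩)
    simp [pid_apply, this]


/-- predecessor on `Fin n` (maps 0 to 0) -/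
def pd (x : Fin n) : Fin n := ⟨x.val - 1, lt_of_le_of_lt (Nat.sub_le _ _) x.isLt⟩

lemma pd_lt {x : Fin n} (h : 1 ≤ x.val) : pd x < x := by
  simp only [Fin.lt_def, pd]; omega

lemma pd_ne {x : Fin n} (h : 1 ≤ x.val) : pd x ≠ x := ne_of_lt (pd_lt h)

/-- the essential (cover) element: fixes `T`, maps `x0` to `x0 - 1` -/
noncomputable def cov (x0 : Fin n) (T : Finset (Fin n)) : PT n :=
  (PEquiv.ofSet (↑(insert x0 T) : Set (Fin n))).trans (Equiv.swap x0 (pd x0)).toPEquiv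

lemma cov_apply (x0 : Fin n) (T : Finset (Fin n)) (x : Fin n) :
    cov x0 T x = if x ∈ insert x0 T then some (Equiv.swap x0 (pd x0) x) else none := by
  rw [cov, show (PEquiv.ofSet (↑(insert x0 T) : Set (Fin n))).trans
      (Equiv.swap x0 (pd x0)).toPEquiv x
    = ((PEquiv.ofSet (↑(insert x0 T) : Set (Fin n))) x).bind
      (Equiv.swap x0 (pd x0)).toPEquiv from rfl]
  rw [show (PEquiv.ofSet (↑(insert x0 T) : Set (Fin n))) x
    = if x ∈ (↑(insert x0 T) : Set (Fin n)) then some x else none from rfl]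
  simp only [Finset.coe_insert, Set.mem_insert_iff, Finset.mem_coe, Finset.mem_insert]
  split_ifs with h
  · simp [Equiv.toPEquiv_apply]
  · rfl

lemma cov_eq_some {x0 : Fin n} {T : Finset (Fin n)} (h1 : 1 ≤ x0.val) (hxT : x0 ∉ T)
    (hpT : pd x0 ∉ T) {x y : Fin n} :
    cov x0 T x = some y ↔ (x = x0 ∧ y = pd x0) ∨ (x ∈ T ∧ y = x) := by
  rw [cov_apply]
  split_ifs with h
  · rcases Finset.mem_insert.1 h with rfl | hxT'
    · rw [Equiv.swap_apply_left]
      constructor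
      · intro h'; exact Or.inl ⟨rfl, (Option.some_inj.1 h').symm⟩
      · rintro (⟨-, rfl⟩ | ⟨hc, rfl⟩)
        · rfl
        · exact absurd hc hxT
    · have hx0 : x ≠ x0 := fun hc => hxT (hc ▸ hxT')
      have hpx : x ≠ pd x0 := fun hc => hpT (hc ▸ hxT')
      rw [Equiv.swap_apply_of_ne_of_ne hx0 hpx]
      constructor
      · intro h'; exact Or.inr ⟨hxT', (Option.some_inj.1 h').symm⟩
      · rintro (⟨hc, -⟩ | ⟨-, rfl⟩)
        · exact absurd hc hx0
        · rfl
  · simp only [Finset.mem_insert, not_or] at h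
    constructor
    · rintro ⟨⟩
    · rintro (⟨hc, -⟩ | ⟨hc, -⟩); · exact absurd hc h.1
      · exact absurd hc h.2

lemma dm_cov (x0 : Fin n) (T : Finset (Fin n)) : dm (cov x0 T) = insert x0 T := by
  ext x
  rw [mem_dm]
  constructor
  · rintro ⟨y, hy⟩
    rw [cov_apply] at hy
    by_contra hc; rw [if_neg hc] at hy; cases hy
  · intro h; exact ⟨_, by rw [cov_apply, if_pos h]⟩

lemma im_cov {x0 : Fin n} {T : Finset (Fin n)} (h1 : 1 ≤ x0.val) (hxT : x0 ∉ T)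
    (hpT : pd x0 ∉ T) : im (cov x0 T) = insert (pd x0) T := by
  ext y
  rw [mem_im, Finset.mem_insert]
  constructor
  · rintro ⟨x, hx⟩
    rcases (cov_eq_some h1 hxT hpT).1 hx with ⟨-, rfl⟩ | ⟨hm, rfl⟩
    · exact Or.inl rfl
    · exact Or.inr hm
  · rintro (rfl | hm)
    · exact ⟨x0, (cov_eq_some h1 hxT hpT).2 (Or.inl ⟨rfl, rfl⟩)⟩
    · exact ⟨y, (cov_eq_some h1 hxT hpT).2 (Or.inr ⟨hm, rfl⟩)⟩

lemma height_cov {x0 : Fin n} {T : Finset (Fin n)} (h1 : 1 ≤ x0.val) (hxT : x0 ∉ T)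
    (hpT : pd x0 ∉ T) : height (cov x0 T) = T.card + 1 := by
  rw [height_eq, im_cov h1 hxT hpT, Finset.card_insert_of_notMem hpT]

lemma W_cov {x0 : Fin n} {T : Finset (Fin n)} (h1 : 1 ≤ x0.val) (hxT : x0 ∉ T)
    (hpT : pd x0 ∉ T) : W (cov x0 T) = 1 := by
  rw [W, dm_cov, im_cov h1 hxT hpT, Finset.sum_insert hxT, Finset.sum_insert hpT]
  have : ((pd x0 : Fin n) : ℤ) = (x0 : ℤ) - 1 := by
    simp only [pd]; omega
  rw [this]; ring

lemma cov_mem_IC {x0 : Fin n} {T : Finset (Fin n)} (h1 : 1 ≤ x0.val) (hxT : x0 ∉ T)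
    (hpT : pd x0 ∉ T) : cov x0 T ∈ IC n := by
  constructor
  · intro a b c d ha hb hab
    have hab' : a.val ≤ b.val := Fin.le_def.1 hab
    rw [Fin.le_def]
    rcases (cov_eq_some h1 hxT hpT).1 ha with ⟨ha1, ha2⟩ | ⟨ha1, ha2⟩ <;>
      rcases (cov_eq_some h1 hxT hpT).1 hb with ⟨hb1, hb2⟩ | ⟨hb1, hb2⟩
    · rw [ha2, hb2]
    · have h2 : x0.val ≤ b.val := by rw [← ha1]; exact hab'
      rw [ha2, hb2]; simp only [pd]; omega
    · have hne : a.val ≠ x0.val := fun hc => hxT ((Fin.ext hc : a = x0) ▸ ha1)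
      have h2 : a.val ≤ x0.val := by rw [← hb1]; exact hab'
      rw [ha2, hb2]; simp only [pd]; omega
    · rw [ha2, hb2]; exact hab'
  · intro a b hab
    rcases (cov_eq_some h1 hxT hpT).1 hab with ⟨ha1, ha2⟩ | ⟨ha1, ha2⟩
    · rw [ha1, ha2]; exact le_of_lt (pd_lt h1)
    · rw [ha2]


/-- the moved points of `f` -/
noncomputable def Mv (f : PT n) : Finset (Fin n) := (dm f).filter (fun x => ev f x ≠ x)

lemma W_eq_sum_moved (f : PT n) : W f = ∑ x ∈ Mv f, ((x : ℤ) - (ev f x : ℤ)) := by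
  rw [W_eq_sum]
  symm
  apply Finset.sum_subset (Finset.filter_subset _ _)
  intro x hx hnx
  have : ev f x = x := by
    by_contra h; exact hnx (Finset.mem_filter.2 ⟨hx, h⟩)
  rw [this]; ring

lemma moved_term_pos {f : PT n} (hf : f ∈ IC n) {x : Fin n} (hx : x ∈ Mv f) :
    1 ≤ (x : ℤ) - (ev f x : ℤ) := by
  obtain ⟨hd, hne⟩ := Finset.mem_filter.1 hx
  have hle : (ev f x).val ≤ x.val := Fin.le_def.1 (ev_le hf hd)
  have hne' : (ev f x).val ≠ x.val := fun hc => hne (Fin.ext hc)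
  have h2 : ((ev f x).val : ℤ) < (x.val : ℤ) := by exact_mod_cast lt_of_le_of_ne hle hne'
  omega

lemma Mv_empty_of_W_eq_zero {f : PT n} (h : Mv f = ∅) : W f = 0 := by
  rw [W_eq_sum_moved, h, Finset.sum_empty]

lemma min_moved_spec {f : PT n} (hf : f ∈ IC n) (hne : (Mv f).Nonempty) :
    (Mv f).min' hne ∈ dm f ∧ (ev f ((Mv f).min' hne)).val < ((Mv f).min' hne).val ∧
      1 ≤ ((Mv f).min' hne).val ∧ pd ((Mv f).min' hne) ∉ dm f := by
  set x0 := (Mv f).min' hne with hx0def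
  obtain ⟨hd, hmoved⟩ := Finset.mem_filter.1 ((Mv f).min'_mem hne)
  have hlt : (ev f x0).val < x0.val :=
    lt_of_le_of_ne (Fin.le_def.1 (ev_le hf hd)) (fun hc => hmoved (Fin.ext hc))
  have h1 : 1 ≤ x0.val := by omega
  refine ⟨hd, hlt, h1, ?_⟩
  intro hpd
  have hnm : pd x0 ∉ Mv f := by
    intro hmem
    have := (Mv f).min'_le _ hmem
    exact absurd this (not_le.2 (pd_lt h1))
  have hfix : ev f (pd x0) = pd x0 := by
    by_contra h
    exact hnm (Finset.mem_filter.2 ⟨hpd, h⟩)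
  have hiso : pd x0 ≤ ev f x0 := by
    have := hf.1 (pd x0) x0 (ev f (pd x0)) (ev f x0) (ev_spec hpd) (ev_spec hd)
      (le_of_lt (pd_lt h1))
    rwa [hfix] at this
  have hle2 : (ev f x0).val ≤ (pd x0).val := by
    simp only [pd]; omega
  have hev : ev f x0 = pd x0 := le_antisymm (Fin.le_def.2 hle2) hiso
  have heq : f x0 = some (pd x0) := by rw [ev_spec hd, hev]
  have heq2 : f (pd x0) = some (pd x0) := by rw [ev_spec hpd, hfix]
  have : x0 = pd x0 := f.inj (Option.mem_def.2 heq) (Option.mem_def.2 heq2)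
  exact absurd this.symm (pd_ne h1)

lemma Mv_nonempty_of_W_pos {f : PT n} (hW : 1 ≤ W f) : (Mv f).Nonempty := by
  rcases Finset.eq_empty_or_nonempty (Mv f) with h | h
  · rw [Mv_empty_of_W_eq_zero h] at hW; omega
  · exact h

/-- classification of weight-one elements -/
lemma eq_cov_of_W_eq_one {f : PT n} (hf : f ∈ IC n) (hW : W f = 1) :
    ∃ x0 : Fin n, 1 ≤ x0.val ∧ x0 ∈ dm f ∧ pd x0 ∉ dm f ∧
      f = cov x0 ((dm f).erase x0) := by
  have hne : (Mv f).Nonempty := Mv_nonempty_of_W_pos (by omega)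
  set x0 := (Mv f).min' hne with hx0def
  obtain ⟨hd, hlt, h1, hpd⟩ := min_moved_spec hf hne
  have hsing : Mv f = {x0} := by
    have hcard : (Mv f).card ≤ 1 := by
      by_contra hc
      obtain ⟨a, ha, b, hb, hab⟩ := Finset.one_lt_card.1 (not_le.1 hc)
      have hsub : ({a, b} : Finset (Fin n)) ⊆ Mv f := by
        intro z hz
        rcases Finset.mem_insert.1 hz with rfl | hz
        · exact ha
        · rw [Finset.mem_singleton.1 hz]; exact hb
      have h2 : (2 : ℤ) ≤ ∑ x ∈ ({a, b} : Finset (Fin n)), ((x : ℤ) - (ev f x : ℤ)) := by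
        rw [Finset.sum_insert (by simp [hab]), Finset.sum_singleton]
        have := moved_term_pos hf ha
        have := moved_term_pos hf hb
        omega
      have h3 := Finset.sum_le_sum_of_subset_of_nonneg hsub
        (fun x hx _ => le_trans zero_le_one (moved_term_pos hf hx))
      rw [← W_eq_sum_moved] at h3
      omega
    exact Finset.eq_singleton_iff_unique_mem.2
      ⟨(Mv f).min'_mem hne, fun y hy => Finset.card_le_one.1 hcard y hy _ ((Mv f).min'_mem hne)⟩
  have hterm : (x0 : ℤ) - (ev f x0 : ℤ) = 1 := by
    have := W_eq_sum_moved f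
    rw [hsing, Finset.sum_singleton] at this
    omega
  have hev : ev f x0 = pd x0 := by
    apply Fin.ext
    simp only [pd]
    omega
  refine ⟨x0, h1, hd, hpd, ?_⟩
  have hxT : x0 ∉ (dm f).erase x0 := Finset.notMem_erase _ _
  have hpT : pd x0 ∉ (dm f).erase x0 := fun hc => hpd (Finset.mem_of_mem_erase hc)
  apply PEquiv.ext
  intro x
  by_cases hxd : x ∈ dm f
  · by_cases hx0 : x = x0
    · subst hx0
      rw [ev_spec hd, hev, (cov_eq_some h1 hxT hpT).2 (Or.inl ⟨rfl, rfl⟩)]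
    · have hfix : ev f x = x := by
        by_contra h
        have : x ∈ Mv f := Finset.mem_filter.2 ⟨hxd, h⟩
        rw [hsing, Finset.mem_singleton] at this
        exact hx0 this
      rw [ev_spec hxd, hfix,
        (cov_eq_some h1 hxT hpT).2 (Or.inr ⟨Finset.mem_erase.2 ⟨hx0, hxd⟩, rfl⟩)]
  · have h1' : f x = none := by
      rcases h' : f x with _ | y
      · rfl
      · exact absurd (mem_dm.2 ⟨y, h'⟩) hxd
    rw [h1', cov_apply, if_neg]
    rw [Finset.insert_erase hd]
    exact hxd


section Decomp
variable {f : PT n} (hf : f ∈ IC n) (hne : (Mv f).Nonempty)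

/-- the decomposition: `f = cov x0 T * f'` where `x0` is the least moved point. -/
lemma exists_decomp {f : PT n} (hf : f ∈ IC n) (hW : 1 ≤ W f) :
    ∃ (x0 : Fin n) (f' : PT n),
      1 ≤ x0.val ∧ x0 ∉ ((dm f).erase x0) ∧ pd x0 ∉ ((dm f).erase x0) ∧
      ((dm f).erase x0).card + 1 = (dm f).card ∧
      f' ∈ IC n ∧ im f' = im f ∧ W f' = W f - 1 ∧
      f = cov x0 ((dm f).erase x0) * f' := by
  have hne : (Mv f).Nonempty := Mv_nonempty_of_W_pos hW
  set x0 := (Mv f).min' hne with hx0def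
  obtain ⟨hd, hlt, h1, hpd⟩ := min_moved_spec hf hne
  set σ := Equiv.swap x0 (pd x0) with hσdef
  set f' : PT n := σ.toPEquiv.trans f with hf'def
  have hf'app : ∀ x, f' x = f (σ x) := fun x => rfl
  have hσx0 : σ x0 = pd x0 := Equiv.swap_apply_left _ _
  have hσpd : σ (pd x0) = x0 := Equiv.swap_apply_right _ _
  have hσother : ∀ x, x ≠ x0 → x ≠ pd x0 → σ x = x := fun x h h' =>
    Equiv.swap_apply_of_ne_of_ne h h'
  -- membership in the domain of f'
  have hdm' : ∀ x : Fin n, x ∈ dm f' ↔ σ x ∈ dm f := by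
    intro x
    rw [mem_dm, mem_dm, hf'app]
  -- key case analysis for domain elements of f'
  have hcases : ∀ x : Fin n, x ∈ dm f' →
      (x = pd x0 ∧ σ x = x0) ∨ (x ≠ x0 ∧ x ≠ pd x0 ∧ σ x = x) := by
    intro x hx
    by_cases h0 : x = x0
    · exfalso
      rw [hdm' x, h0, hσx0] at hx
      exact hpd hx
    by_cases hp : x = pd x0
    · exact Or.inl ⟨hp, by rw [hp, hσpd]⟩
    · exact Or.inr ⟨h0, hp, hσother x h0 hp⟩
  have hdm'' : dm f' = insert (pd x0) ((dm f).erase x0) := by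
    ext x
    rw [hdm' x, Finset.mem_insert, Finset.mem_erase]
    constructor
    · intro hx
      by_cases h0 : x = x0
      · rw [h0, hσx0] at hx; exact absurd hx hpd
      by_cases hp : x = pd x0
      · exact Or.inl hp
      · rw [hσother x h0 hp] at hx; exact Or.inr ⟨h0, hx⟩
    · rintro (rfl | ⟨hx0, hxd⟩)
      · rw [hσpd]; exact hd
      · rw [hσother x hx0 (fun hc => hpd (hc ▸ hxd))]; exact hxd
  have him' : im f' = im f := by
    ext y
    rw [mem_im, mem_im]
    constructor
    · rintro ⟨x, hx⟩; exact ⟨σ x, by rw [← hf'app]; exact hx⟩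
    · rintro ⟨z, hz⟩
      exact ⟨σ z, by rw [hf'app, Equiv.swap_apply_self]; exact hz⟩
  have hIC' : f' ∈ IC n := by
    constructor
    · intro a b c d ha hb hab
      have hadm : a ∈ dm f' := mem_dm.2 ⟨c, ha⟩
      have hbdm : b ∈ dm f' := mem_dm.2 ⟨d, hb⟩
      rw [hf'app] at ha hb
      have hσle : σ a ≤ σ b := by
        rw [Fin.le_def]
        have hab' := Fin.le_def.1 hab
        have hpdval : (pd x0).val = x0.val - 1 := rfl
        rcases hcases a hadm with ⟨ha1, ha2⟩ | ⟨ha1, ha2, ha3⟩ <;>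
          rcases hcases b hbdm with ⟨hb1, hb2⟩ | ⟨hb1, hb2, hb3⟩
        · rw [ha2, hb2]
        · rw [ha2, hb3]
          have : a.val = x0.val - 1 := by rw [ha1]; exact hpdval
          have : b.val ≠ x0.val - 1 := fun hc => hb2 (Fin.ext (by rw [hc]; rfl))
          have : b.val ≠ x0.val := fun hc => hb1 (Fin.ext hc)
          omega
        · rw [ha3, hb2]
          have : b.val = x0.val - 1 := by rw [hb1]; exact hpdval
          have : a.val ≠ x0.val - 1 := fun hc => ha2 (Fin.ext (by rw [hc]; rfl))
          omega
        · rw [ha3, hb3]; exact hab'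
      exact hf.1 (σ a) (σ b) c d ha hb hσle
    · intro a b hab
      have hadm : a ∈ dm f' := mem_dm.2 ⟨b, hab⟩
      rw [hf'app] at hab
      have hble := hf.2 (σ a) b hab
      rcases hcases a hadm with ⟨ha1, ha2⟩ | ⟨ha1, ha2, ha3⟩
      · rw [ha2] at hble
        have hbev : b = ev f x0 := (ev_eq (by rw [← ha2]; exact hab)).symm
        rw [Fin.le_def, ha1]
        have : b.val < x0.val := by rw [hbev]; exact hlt
        simp only [pd]; omega
      · rw [ha3] at hble; exact hble
  have hW' : W f' = W f - 1 := by
    rw [W, W, hdm'', him']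
    have h2 : ∑ x ∈ insert (pd x0) ((dm f).erase x0), ((x : ℕ) : ℤ)
        = ((pd x0 : ℕ) : ℤ) + ∑ x ∈ (dm f).erase x0, ((x : ℕ) : ℤ) :=
      Finset.sum_insert (fun hc => hpd (Finset.mem_of_mem_erase hc))
    have h3 : ((x0 : ℕ) : ℤ) + ∑ x ∈ (dm f).erase x0, ((x : ℕ) : ℤ)
        = ∑ x ∈ dm f, ((x : ℕ) : ℤ) :=
      Finset.add_sum_erase (dm f) (fun x : Fin n => ((x : ℕ) : ℤ)) hd
    have h4 : (((pd x0 : Fin n) : ℕ) : ℤ) = ((x0 : ℕ) : ℤ) - 1 := by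
      simp only [pd]; omega
    rw [h2]
    omega
  have hfactor : f = cov x0 ((dm f).erase x0) * f' := by
    rw [hf'def, cov, mul_def, PEquiv.trans_assoc, ← PEquiv.trans_assoc σ.toPEquiv,
      ← Equiv.toPEquiv_trans, Equiv.swap_swap, Equiv.toPEquiv_refl, PEquiv.refl_trans]
    rw [Finset.insert_erase hd]
    exact (ofSet_trans_self (fun x hx => Finset.mem_coe.2 hx)).symm
  exact ⟨x0, f', h1, Finset.notMem_erase _ _,
    fun hc => hpd (Finset.mem_of_mem_erase hc),
    by
      have hcpos : 0 < (dm f).card := Finset.card_pos.2 ⟨_, hd⟩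
      rw [Finset.card_erase_of_mem hd]; omega,
    hIC', him', hW', hfactor⟩

end Decomp


lemma one_mem_IC : (1 : PT n) ∈ IC n := by
  constructor
  · intro x1 x2 y1 y2 h1 h2 hle
    cases h1; cases h2; exact hle
  · intro x y h; cases h; exact le_refl _

lemma list_prod_mem_IC {l : List (PT n)} (h : ∀ y ∈ l, y ∈ IC n) : l.prod ∈ IC n := by
  induction l with
  | nil => rw [List.prod_nil]; exact one_mem_IC
  | cons a t ih =>
    rw [List.prod_cons]
    exact IC_mul (h a (List.mem_cons_self (a := a) (l := t))) (ih fun y hy => h y (List.mem_cons_of_mem a hy))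

lemma mem_closure_list {A : Set (PT n)} {x : PT n} (hx : x ∈ Subsemigroup.closure A) :
    ∃ l : List (PT n), l ≠ [] ∧ (∀ y ∈ l, y ∈ A) ∧ l.prod = x := by
  induction hx using Subsemigroup.closure_induction with
  | mem y hy => exact ⟨[y], by simp, by simp [hy], by simp⟩
  | mul a b _ _ iha ihb =>
    obtain ⟨l1, h1, h2, h3⟩ := iha
    obtain ⟨l2, h4, h5, h6⟩ := ihb
    refine ⟨l1 ++ l2, by simp [h1], ?_, by rw [List.prod_append, h3, h6]⟩
    intro y hy
    rcases List.mem_append.1 hy with h | h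
    · exact h2 y h
    · exact h5 y h

/-- a product of height-`p` elements of `IC n` which has height `p` and weight at most `1`
must be one of the factors -/
lemma prod_mem_of_low_weight {p : ℕ} :
    ∀ l : List (PT n), l ≠ [] → (∀ y ∈ l, y ∈ IC n ∧ height y = p) →
      height l.prod = p → W l.prod ≤ 1 → l.prod ∈ l := by
  intro l
  induction l with
  | nil => intro h; exact absurd rfl h
  | cons a t ih =>
    intro _ hall hh hW
    by_cases htne0 : t = []
    · subst htne0; simp
    obtain ⟨b, t', rfl⟩ := List.exists_cons_of_ne_nil htne0
    have htne : b :: t' ≠ [] := htne0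
    set t := b :: t' with htdef
    set q := t.prod with hq
    have hprod : (a :: t).prod = a * q := List.prod_cons
    have haIC := (hall a (List.mem_cons_self (a := a) (l := t))).1
    have hahp := (hall a (List.mem_cons_self (a := a) (l := t))).2
    have hqIC : q ∈ IC n := list_prod_mem_IC (fun y hy => (hall y (List.mem_cons_of_mem a hy)).1)
    have hhq : height q = p := by
      apply le_antisymm
      · have hbt : b ∈ t := List.mem_cons_self (a := b) (l := t')
        have : height q ≤ height b := by
          rw [hq, htdef, List.prod_cons]
          exact height_mul_le_left _ _
        rw [(hall b (List.mem_cons_of_mem a hbt)).2] at this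
        exact this
      · rw [← hh, hprod]; exact height_mul_le_right a q
    have hhaq : height (a * q) = p := by rw [← hprod]; exact hh
    have him : im a = dm q := im_eq_dm_of_height hahp hhq hhaq
    have hWadd : W (a * q) = W a + W q := W_mul_of_im_eq him
    have hWa := W_nonneg haIC
    have hWq := W_nonneg hqIC
    have hWprod : W (a * q) ≤ 1 := by rw [← hprod]; exact hW
    by_cases hWa0 : W a = 0
    · have hapid : a = pid (↑(dm a) : Set (Fin n)) := eq_pid_of_W_eq_zero haIC hWa0
      have hdmim : dm a = im a := by
        conv_lhs => rw [hapid]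
        rw [dm_pid]
        conv_lhs => rw [← im_pid (dm a), ← hapid]
      have haq : a * q = q := by
        rw [hapid, hdmim, him]
        exact pid_trans_self (Finset.Subset.refl _)
      have : q ∈ t := by
        apply ih htne (fun y hy => hall y (List.mem_cons_of_mem a hy)) hhq
        rw [← haq]; exact hWprod
      rw [hprod, haq]
      exact List.mem_cons_of_mem a this
    · have hWq0 : W q = 0 := by omega
      have hqpid : q = pid (↑(dm q) : Set (Fin n)) := eq_pid_of_W_eq_zero hqIC hWq0
      have haq : a * q = a := by
        rw [hqpid, ← him]
        exact trans_pid_self (Finset.Subset.refl _)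
      rw [hprod, haq]
      exact List.mem_cons_self (a := a) (l := t)

/-- the optimal generating set: elements of height `p` and weight at most `1` -/
def Gset (n p : ℕ) : Set (PT n) := {f | f ∈ IC n ∧ height f = p ∧ W f ≤ 1}

lemma Hp_subset_closure_Gset {p : ℕ} :
    {α : PT n | α ∈ IC n ∧ height α = p} ⊆ ↑(Subsemigroup.closure (Gset n p)) := by
  suffices H : ∀ k : ℕ, ∀ f : PT n, f ∈ IC n → height f = p → (W f).toNat = k →
      f ∈ Subsemigroup.closure (Gset n p) by
    intro f hf
    exact H (W f).toNat f hf.1 hf.2 rfl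
  intro k
  induction k using Nat.strong_induction_on with
  | _ k ihk =>
    intro f hfIC hfh hfk
    have hWnn := W_nonneg hfIC
    by_cases hW0 : W f = 0
    · exact Subsemigroup.subset_closure ⟨hfIC, hfh, by omega⟩
    · have hW1 : 1 ≤ W f := by omega
      obtain ⟨x0, f', h1, hxT, hpT, hcard, hf'IC, him', hW', hfactor⟩ := exists_decomp hfIC hW1
      have hcIC := cov_mem_IC h1 hxT hpT
      have hch : height (cov x0 ((dm f).erase x0)) = p := by
        rw [height_cov h1 hxT hpT, hcard, card_dm_eq, ← height_eq, hfh]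
      have hcG : cov x0 ((dm f).erase x0) ∈ Gset n p :=
        ⟨hcIC, hch, by rw [W_cov h1 hxT hpT]⟩
      have hf'h : height f' = p := by rw [height_eq, him', ← height_eq, hfh]
      have hf'mem : f' ∈ Subsemigroup.closure (Gset n p) :=
        ihk (W f').toNat (by omega) f' hf'IC hf'h rfl
      rw [hfactor]
      exact Subsemigroup.mul_mem _ (Subsemigroup.subset_closure hcG) hf'mem


noncomputable instance : Finite (PT n) :=
  Finite.of_injective (fun f : PT n => (⇑f : Fin n → Option (Fin n)))
    (fun f g h => PEquiv.ext (congrFun h))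

noncomputable def G0F (n p : ℕ) : Finset (PT n) :=
  ((Finset.univ : Finset (Fin n)).powersetCard p).image
    (fun T : Finset (Fin n) => pid (↑T : Set (Fin n)))

noncomputable def E1 (n p : ℕ) : Finset ((_ : Fin n) × Finset (Fin n)) :=
  ((Finset.univ : Finset (Fin n)).filter (fun x : Fin n => 1 ≤ x.val)).sigma
    (fun x0 => ((Finset.univ : Finset (Fin n)) \ {x0, pd x0}).powersetCard (p - 1))

noncomputable def G1F (n p : ℕ) : Finset (PT n) :=
  (E1 n p).image (fun q => cov q.1 q.2)

lemma pid_injective : Function.Injective (fun T : Finset (Fin n) => pid (↑T : Set (Fin n))) := by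
  intro T1 T2 h
  rw [← dm_pid T1, ← dm_pid T2]
  simp only at h
  rw [h]

lemma card_G0F (hn : 0 < n) (p : ℕ) : (G0F n p).card = Nat.choose n p := by
  rw [G0F, Finset.card_image_of_injective _ pid_injective, Finset.card_powersetCard,
    Finset.card_fin]

lemma mem_E1 {p : ℕ} {q : (_ : Fin n) × Finset (Fin n)} :
    q ∈ E1 n p ↔ 1 ≤ q.1.val ∧ q.2 ⊆ Finset.univ \ {q.1, pd q.1} ∧ q.2.card = p - 1 := by
  rw [E1, Finset.mem_sigma, Finset.mem_filter, Finset.mem_powersetCard]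
  constructor
  · rintro ⟨⟨-, h1⟩, h2, h3⟩; exact ⟨h1, h2, h3⟩
  · rintro ⟨h1, h2, h3⟩; exact ⟨⟨Finset.mem_univ _, h1⟩, h2, h3⟩

lemma E1_not_mem {p : ℕ} {q : (_ : Fin n) × Finset (Fin n)} (hq : q ∈ E1 n p) :
    q.1 ∉ q.2 ∧ pd q.1 ∉ q.2 := by
  obtain ⟨-, hsub, -⟩ := mem_E1.1 hq
  constructor
  · intro hc
    have := Finset.mem_sdiff.1 (hsub hc)
    simp at this
  · intro hc
    have := Finset.mem_sdiff.1 (hsub hc)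
    simp at this

lemma card_E1 (hn : 0 < n) (p : ℕ) : (E1 n p).card = (n - 1) * Nat.choose (n - 2) (p - 1) := by
  rw [E1, Finset.card_sigma]
  have hcard : ∀ x0 ∈ (Finset.univ : Finset (Fin n)).filter (fun x : Fin n => 1 ≤ x.val),
      (((Finset.univ : Finset (Fin n)) \ {x0, pd x0}).powersetCard (p - 1)).card
        = Nat.choose (n - 2) (p - 1) := by
    intro x0 hx0
    have h1 : 1 ≤ x0.val := (Finset.mem_filter.1 hx0).2
    rw [Finset.card_powersetCard, Finset.card_sdiff_of_subset (Finset.subset_univ _),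
      Finset.card_fin]
    congr 2
    have hx0pd : x0 ∉ ({pd x0} : Finset (Fin n)) := by
      simp only [Finset.mem_singleton]
      exact fun hc => pd_ne h1 hc.symm
    rw [Finset.card_insert_of_notMem hx0pd, Finset.card_singleton]
  rw [Finset.sum_congr rfl hcard, Finset.sum_const, smul_eq_mul]
  congr 1
  have hsplit := Finset.card_filter_add_card_filter_not
    (s := (Finset.univ : Finset (Fin n))) (p := fun x : Fin n => 1 ≤ x.val)
  have hzero : (Finset.univ : Finset (Fin n)).filter (fun x : Fin n => ¬ 1 ≤ x.val)
      = {⟨0, hn⟩} := by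
    ext x
    simp only [Finset.mem_filter, Finset.mem_univ, true_and, Finset.mem_singleton, not_le,
      Fin.ext_iff]
    omega
  rw [hzero] at hsplit
  simp only [Finset.card_singleton, Finset.card_fin] at hsplit
  omega

lemma cov_injOn_E1 {p : ℕ} : Set.InjOn (fun q : (_ : Fin n) × Finset (Fin n) => cov q.1 q.2)
    ↑(E1 n p) := by
  rintro ⟨x0, T⟩ hq ⟨x0', T'⟩ hq' heq
  simp only [Finset.mem_coe] at hq hq'
  obtain ⟨h1, hsub, hcard⟩ := mem_E1.1 hq
  obtain ⟨h1', hsub', hcard'⟩ := mem_E1.1 hq'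
  obtain ⟨hxT, hpT⟩ := E1_not_mem hq
  obtain ⟨hxT', hpT'⟩ := E1_not_mem hq'
  simp only at heq h1 h1' hxT hpT hxT' hpT'
  have happ : cov x0' T' x0 = some (pd x0) := by
    rw [← heq]
    exact (cov_eq_some h1 hxT hpT).2 (Or.inl ⟨rfl, rfl⟩)
  have hx0eq : x0 = x0' := by
    rcases (cov_eq_some h1' hxT' hpT').1 happ with ⟨he, -⟩ | ⟨-, he⟩
    · exact he
    · exfalso; exact pd_ne h1 he
  subst hx0eq
  have hdm : insert x0 T = insert x0 T' := by
    rw [← dm_cov x0 T, ← dm_cov x0 T', heq]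
  have : T = T' := by
    rw [← Finset.erase_insert hxT, ← Finset.erase_insert hxT', hdm]
  subst this
  rfl

lemma card_G1F (hn : 0 < n) (p : ℕ) : (G1F n p).card = (n - 1) * Nat.choose (n - 2) (p - 1) := by
  rw [G1F, Finset.card_image_of_injOn cov_injOn_E1, card_E1 hn]

/-- the weight-0 part of `Gset` -/
lemma G0_eq (p : ℕ) :
    {f : PT n | f ∈ IC n ∧ height f = p ∧ W f = 0} = ↑(G0F n p) := by
  ext f
  simp only [Set.mem_setOf_eq, G0F, Finset.coe_image, Set.mem_image, Finset.mem_coe,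
    Finset.mem_powersetCard]
  constructor
  · rintro ⟨hIC, hh, hW⟩
    refine ⟨dm f, ⟨Finset.subset_univ _, ?_⟩, (eq_pid_of_W_eq_zero hIC hW).symm⟩
    rw [card_dm_eq, ← height_eq, hh]
  · rintro ⟨T, ⟨-, hcard⟩, rfl⟩
    exact ⟨pid_mem_IC T, by rw [height_pid, hcard], W_pid T⟩

/-- the weight-1 part of `Gset` -/
lemma G1_eq {p : ℕ} (hp : 1 ≤ p) :
    {f : PT n | f ∈ IC n ∧ height f = p ∧ W f = 1} = ↑(G1F n p) := by
  ext f
  simp only [Set.mem_setOf_eq, G1F, Finset.coe_image, Set.mem_image, Finset.mem_coe]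
  constructor
  · rintro ⟨hIC, hh, hW⟩
    obtain ⟨x0, h1, hd, hpd, hf⟩ := eq_cov_of_W_eq_one hIC hW
    refine ⟨⟨x0, (dm f).erase x0⟩, mem_E1.2 ⟨h1, ?_, ?_⟩, hf.symm⟩
    · intro z hz
      obtain ⟨hzx, hzd⟩ := Finset.mem_erase.1 hz
      rw [Finset.mem_sdiff]
      refine ⟨Finset.mem_univ _, ?_⟩
      simp only [Finset.mem_insert, Finset.mem_singleton]
      push_neg
      exact ⟨hzx, fun hc => hpd (hc ▸ hzd)⟩
    · rw [Finset.card_erase_of_mem hd, card_dm_eq, ← height_eq, hh]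
  · rintro ⟨⟨x0, T⟩, hq, rfl⟩
    obtain ⟨h1, hsub, hcard⟩ := mem_E1.1 hq
    obtain ⟨hxT, hpT⟩ := E1_not_mem hq
    simp only at h1 hsub hcard hxT hpT ⊢
    exact ⟨cov_mem_IC h1 hxT hpT, by rw [height_cov h1 hxT hpT, hcard]; omega,
      W_cov h1 hxT hpT⟩

lemma Gset_eq {p : ℕ} (hp : 1 ≤ p) :
    Gset n p = ↑(G0F n p ∪ G1F n p) := by
  rw [Finset.coe_union, ← G0_eq p, ← G1_eq hp]
  ext f
  simp only [Gset, Set.mem_setOf_eq, Set.mem_union]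
  constructor
  · rintro ⟨hIC, hh, hW⟩
    have := W_nonneg hIC
    rcases eq_or_lt_of_le hW with h | h
    · exact Or.inr ⟨hIC, hh, h⟩
    · exact Or.inl ⟨hIC, hh, by omega⟩
  · rintro (⟨hIC, hh, hW⟩ | ⟨hIC, hh, hW⟩)
    · exact ⟨hIC, hh, by omega⟩
    · exact ⟨hIC, hh, by omega⟩

lemma ncard_Gset (hn : 0 < n) {p : ℕ} (hp : 1 ≤ p) :
    (Gset n p).ncard = Nat.choose n p + (n - 1) * Nat.choose (n - 2) (p - 1) := by
  rw [Gset_eq hp, Set.ncard_coe_finset, Finset.card_union_of_disjoint, card_G0F hn,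
    card_G1F hn]
  rw [Finset.disjoint_left]
  intro f h0 h1
  have hf0 : f ∈ {f : PT n | f ∈ IC n ∧ height f = p ∧ W f = 0} := by
    rw [G0_eq p]; exact_mod_cast h0
  have hf1 : f ∈ {f : PT n | f ∈ IC n ∧ height f = p ∧ W f = 1} := by
    rw [G1_eq hp]; exact_mod_cast h1
  have := hf0.2.2
  have := hf1.2.2
  omega


end Aux

/-- for `1 ≤ p ≤ n-1`, the least cardinality of a set
`A ⊆ {α ∈ IC_n : |im α| = p}` such that every element of `IC_n` of height `p` is a
finite product of elements of `A` equals `C(n,p) + (n-1)·C(n-2,p-1)`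
(the rank of the Rees quotient `RIC_n(p)`). -/
theorem stmt15 (n p : ℕ) (hp1 : 1 ≤ p) (hpn : p ≤ n - 1) (hn : 0 < n) :
    IsLeast
      {k : ℕ | ∃ A : Set (PT n),
        A ⊆ {α | α ∈ IC n ∧ height α = p} ∧
        {α | α ∈ IC n ∧ height α = p} ⊆ ↑(Subsemigroup.closure A) ∧
        A.ncard = k}
      (Nat.choose n p + (n - 1) * Nat.choose (n - 2) (p - 1)) := by
  have hn2 : 2 ≤ n := by omega
  constructor
  · refine ⟨Gset n p, ?_, ?_, ncard_Gset hn hp1⟩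
    · intro f hf
      exact ⟨hf.1, hf.2.1⟩
    · exact Hp_subset_closure_Gset
  · rintro k ⟨A, hA1, hA2, rfl⟩
    have hGA : Gset n p ⊆ A := by
      intro g hg
      have hgH : g ∈ {α : PT n | α ∈ IC n ∧ height α = p} := ⟨hg.1, hg.2.1⟩
      obtain ⟨l, hne, hmem, hprod⟩ := mem_closure_list (hA2 hgH)
      have hpl : l.prod ∈ l := prod_mem_of_low_weight l hne
        (fun y hy => hA1 (hmem y hy)) (by rw [hprod]; exact hg.2.1)
        (by rw [hprod]; exact hg.2.2)
      rw [hprod] at hpl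
      exact hmem g hpl
    rw [← ncard_Gset hn hp1]
    exact Set.ncard_le_ncard hGA (Set.toFinite A)

end ICCatalan
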